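/- Let n1 be a positive integer with the property that e_{n1−1,r}(ν)^r ≤ C1·C2^{−1}·18^{−(r+s0)} for every Borel probability measure ν on ℝ^q whose support is compact of diameter at most 1. Let k ≥ k0, σ ∈ Ω_k, and let β ⊆ ℝ^q be a finite nonempty set with card(β ∩ B(c_σ,(9/4)m^{-k})) < n1. Write E' := B(c_σ,(9/8)m^{-k}). Then: (i) if there exist y ∈ E_σ ∩ K and b ∈ β ∖ B(c_σ,(9/4)m^{-k}) with d(y,b) = d(y,β), then ∫_{E'} d(x,β)^r dμ(x) ≥ μ(E')·diam(E')^r·e_{n1−1,r}(λ_{E'})^r; (ii) otherwise, ∫_{E_σ} d(x,β)^r dμ(x) ≥ μ(E_σ)·diam(E_σ)^r·e_{n1−1,r}(λ_{E_σ})^r. -/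

import Mathlib

open MeasureTheory Metric Set

noncomputable section

variable {E : Type*} [NormedAddCommGroup E] [NormedSpace ℝ E]
  [MeasurableSpace E] [BorelSpace E]

/-- The (topological) support of a Borel measure: the set of points all of whose
neighborhoods have positive measure. -/
def msupp (μ : Measure E) : Set E := {x | ∀ ε : ℝ, 0 < ε → 0 < μ (ball x ε)}

/-- The set of achievable quantization integrals `∫ d(x,α)^r dν` over sets `α` with
`1 ≤ card α ≤ n`. -/
def quantSet (ν : Measure E) (r : ℝ) (n : ℕ) : Set ℝ :=
  {I | ∃ α : Finset E, α.Nonempty ∧ α.card ≤ n ∧ I = ∫ x, infDist x (α : Set E) ^ r ∂ν}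

/-- The `n`-th quantization error of order `r`, raised to the power `r`:
`e_{n,r}(ν)^r = inf { ∫ d(x,α)^r dν : 1 ≤ card α ≤ n }`. -/
def quantErrPow (ν : Measure E) (r : ℝ) (n : ℕ) : ℝ := sInf (quantSet ν r n)

/-- `α` is an `n`-optimal set for `ν` of order `r`. -/
def IsOptimalSet (ν : Measure E) (r : ℝ) (n : ℕ) (α : Finset E) : Prop :=
  α.Nonempty ∧ α.card ≤ n ∧ (∫ x, infDist x (α : Set E) ^ r ∂ν) = quantErrPow ν r n

/-- `P` is a Voronoi partition (into Borel sets) with respect to the finite set `α`. -/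
def IsVoronoiPartition (α : Finset E) (P : E → Set E) : Prop :=
  (∀ a ∈ α, MeasurableSet (P a)) ∧
  ((⋃ a ∈ α, P a) = univ) ∧
  (∀ a ∈ α, ∀ b ∈ α, a ≠ b → Disjoint (P a) (P b)) ∧
  (∀ a ∈ α, {x | dist x a < infDist x ((α : Set E) \ {a})} ⊆ P a) ∧
  (∀ a ∈ α, P a ⊆ {x | dist x a = infDist x (α : Set E)})

/-- `I_a(α,ν) = ∫_{P_a(α)} d(x,α)^r dν`. -/
def voronoiI (ν : Measure E) (r : ℝ) (α : Finset E) (P : E → Set E) (a : E) : ℝ :=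
  ∫ x in P a, infDist x (α : Set E) ^ r ∂ν

/-- `μ` is `s0`-dimensional Ahlfors–David regular with constants `ε0, C1, C2`, together
with the global upper bound (valid for all centers and radii). -/
def IsAhlfors (μ : Measure E) (s0 ε0 C1 C2 : ℝ) : Prop :=
  0 < s0 ∧ 0 < ε0 ∧ 0 < C1 ∧ 0 < C2 ∧
  (∀ x ∈ msupp μ, ∀ ε : ℝ, 0 < ε → ε < ε0 →
    ENNReal.ofReal (C1 * ε ^ s0) ≤ μ (closedBall x ε) ∧
    μ (closedBall x ε) ≤ ENNReal.ofReal (C2 * ε ^ s0)) ∧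
  (∀ x : E, ∀ ε : ℝ, 0 < ε → μ (closedBall x ε) ≤ ENNReal.ofReal (C2 * ε ^ s0))

/-- `h` is a similitude of ratio `ρ`. -/
def IsSimilitude (h : E → E) (ρ : ℝ) : Prop :=
  Function.Surjective h ∧ ∀ x y, dist (h x) (h y) = ρ * dist x y

/-- The measure `λ_B = μ(·|B) ∘ h`, i.e. `λ_B(A) = μ(h(A) ∩ B)/μ(B)`. -/
def condPull (μ : Measure E) (B : Set E) (h : E → E) : Measure E :=
  Measure.comap h (ProbabilityTheory.cond μ B)

/-- There exist `j` pairwise disjoint closed balls of radius `ρ` centered in `K`. -/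
def PackingNum (K : Set E) (ρ : ℝ) (j : ℕ) : Prop :=
  ∃ c : Fin j → E, (∀ i, c i ∈ K) ∧
    Pairwise fun i i' => Disjoint (closedBall (c i) ρ) (closedBall (c i') ρ)

end

section Aux
set_option linter.unusedSectionVars false
set_option linter.unusedVariables false
variable {E : Type*} [NormedAddCommGroup E] [NormedSpace ℝ E]
  [MeasurableSpace E] [BorelSpace E]

lemma msupp_compl_null [SecondCountableTopology E] (μ : Measure E) : μ (msupp μ)ᶜ = 0 := by
  apply measure_null_of_locally_null
  intro x hx
  simp only [msupp, mem_compl_iff, mem_setOf_eq, not_forall] at hx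
  obtain ⟨ε, hε, hμε⟩ := hx
  exact ⟨ball x ε, mem_nhdsWithin_of_mem_nhds (ball_mem_nhds x hε),
    le_antisymm (le_of_not_gt hμε) zero_le⟩

lemma msupp_closed (μ : Measure E) : IsClosed (msupp μ) := by
  rw [← isOpen_compl_iff]
  rw [isOpen_iff]
  intro x hx
  simp only [msupp, mem_compl_iff, mem_setOf_eq, not_forall] at hx
  obtain ⟨ε, hε, hμε⟩ := hx
  refine ⟨ε/2, by linarith, fun y hy => ?_⟩
  simp only [msupp, mem_compl_iff, mem_setOf_eq, not_forall]
  refine ⟨ε/2, by linarith, fun hpos => ?_⟩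
  have : ball y (ε/2) ⊆ ball x ε := by
    intro z hz
    have := mem_ball.1 hy; have := mem_ball.1 hz
    rw [mem_ball]
    calc dist z x ≤ dist z y + dist y x := dist_triangle _ _ _
    _ < ε/2 + ε/2 := by gcongr
    _ = ε := by ring
  have h2 : μ (ball y (ε/2)) = 0 :=
    le_antisymm ((measure_mono this).trans (le_of_not_gt hμε)) zero_le
  exact absurd h2 (ne_of_gt hpos)



namespace Sim

variable {h : E → E} {ρ : ℝ}

lemma inj (hs : IsSimilitude h ρ) (hρ : 0 < ρ) : Function.Injective h := fun a b hab => by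
  have h2 := hs.2 a b
  rw [hab, dist_self] at h2
  have : dist a b = 0 := by
    rcases mul_eq_zero.1 h2.symm with h' | h'
    · exact absurd h' hρ.ne'
    · exact h'
  exact dist_eq_zero.1 this

noncomputable def homeo (hs : IsSimilitude h ρ) (hρ : 0 < ρ) : E ≃ₜ E where
  toEquiv := Equiv.ofBijective h ⟨inj hs hρ, hs.1⟩
  continuous_toFun := by
    refine (LipschitzWith.of_dist_le_mul (K := ρ.toNNReal) (fun a b => ?_)).continuous
    rw [Real.coe_toNNReal _ hρ.le]
    exact (hs.2 a b).le
  continuous_invFun := by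
    refine (LipschitzWith.of_dist_le_mul (K := ρ⁻¹.toNNReal) (fun a b => ?_)).continuous
    rw [Real.coe_toNNReal _ (by positivity)]
    set e := Equiv.ofBijective h ⟨inj hs hρ, hs.1⟩
    have : dist (h (e.symm a)) (h (e.symm b)) = dist a b := by
      have ha : h (e.symm a) = a := e.apply_symm_apply a
      have hb : h (e.symm b) = b := e.apply_symm_apply b
      rw [ha, hb]
    rw [hs.2 (e.symm a) (e.symm b)] at this
    show dist (e.symm a) (e.symm b) ≤ ρ⁻¹ * dist a b
    rw [show dist (e.symm a) (e.symm b) = ρ⁻¹ * dist a b by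
      field_simp; linarith [this]]

lemma homeo_apply (hs : IsSimilitude h ρ) (hρ : 0 < ρ) (x : E) : homeo hs hρ x = h x := rfl

lemma symm_dist (hs : IsSimilitude h ρ) (hρ : 0 < ρ) (a b : E) :
    dist ((homeo hs hρ).symm a) ((homeo hs hρ).symm b) = ρ⁻¹ * dist a b := by
  set e := homeo hs hρ
  have key : dist (h (e.symm a)) (h (e.symm b)) = dist a b := by
    have ha : h (e.symm a) = a := e.apply_symm_apply a
    have hb : h (e.symm b) = b := e.apply_symm_apply b
    rw [ha, hb]
  rw [hs.2 (e.symm a) (e.symm b)] at key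
  field_simp
  linarith [key]

lemma comap_eq_map (hs : IsSimilitude h ρ) (hρ : 0 < ρ) (ν : Measure E) :
    Measure.comap h ν = Measure.map (homeo hs hρ).symm ν := by
  have hemb : MeasurableEmbedding h := (homeo hs hρ).measurableEmbedding
  refine Measure.ext fun s hms => ?_
  rw [hemb.comap_apply, (homeo hs hρ).symm.measurableEmbedding.map_apply]
  congr 1
  ext x
  constructor
  · rintro ⟨y, hy, rfl⟩
    simp only [mem_preimage]
    rwa [show (homeo hs hρ).symm (h y) = y from (homeo hs hρ).toEquiv.symm_apply_apply y]
  · intro hx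
    exact ⟨(homeo hs hρ).symm x, hx, (homeo hs hρ).apply_symm_apply x⟩

end Sim



lemma quantSet_nonneg {ν : Measure E} {r : ℝ} {n : ℕ} {I : ℝ} (hI : I ∈ quantSet ν r n) :
    0 ≤ I := by
  obtain ⟨α, -, -, rfl⟩ := hI
  exact integral_nonneg fun x => Real.rpow_nonneg infDist_nonneg r

lemma quantErrPow_nonneg (ν : Measure E) (r : ℝ) (n : ℕ) : 0 ≤ quantErrPow ν r n := by
  rcases eq_empty_or_nonempty (quantSet ν r n) with he | he
  · simp [quantErrPow, he, Real.sInf_empty]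
  · exact le_csInf he fun I hI => quantSet_nonneg hI

lemma quantErrPow_le {ν : Measure E} {r : ℝ} {n : ℕ} {α : Finset E} (hα : α.Nonempty)
    (hcard : α.card ≤ n) : quantErrPow ν r n ≤ ∫ x, infDist x (α : Set E) ^ r ∂ν :=
  csInf_le ⟨0, fun _ hI => quantSet_nonneg hI⟩ ⟨α, hα, hcard, rfl⟩

lemma infDist_finset_exists {s : Finset E} (hs : s.Nonempty) (x : E) :
    ∃ a ∈ s, infDist x (s : Set E) = dist x a := by
  obtain ⟨a, ha, h⟩ := s.finite_toSet.isCompact.exists_infDist_eq_dist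
    (by exact_mod_cast hs) x
  exact ⟨a, by exact_mod_cast ha, h⟩

lemma infDist_image_sim [DecidableEq E] {g : E → E} {t : ℝ} (ht : 0 ≤ t)
    (hg : ∀ a b, dist (g a) (g b) = t * dist a b)
    {s : Finset E} (hs : s.Nonempty) (x : E) :
    infDist (g x) ((s.image g : Finset E) : Set E) = t * infDist x (s : Set E) := by
  rw [Finset.coe_image]
  apply le_antisymm
  · obtain ⟨a, ha, hda⟩ := infDist_finset_exists hs x
    calc infDist (g x) (g '' s) ≤ dist (g x) (g a) :=
          infDist_le_dist_of_mem ⟨a, ha, rfl⟩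
    _ = t * dist x a := hg x a
    _ = t * infDist x (s : Set E) := by rw [hda]
  · obtain ⟨b, hb, hdb⟩ := infDist_finset_exists (hs.image g) (g x)
    obtain ⟨a, ha, rfl⟩ := Finset.mem_image.1 hb
    rw [Finset.coe_image] at hdb
    calc t * infDist x (s : Set E) ≤ t * dist x a :=
          mul_le_mul_of_nonneg_left (infDist_le_dist_of_mem ha) ht
    _ = dist (g x) (g a) := (hg x a).symm
    _ = infDist (g x) (g '' s) := hdb.symm

section Master

variable {μ : Measure E} [IsProbabilityMeasure μ] [FiniteDimensional ℝ E]

lemma measure_ball_pos_of_msupp {c : E} (hc : c ∈ msupp μ) {R : ℝ} (hR : 0 < R) :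
    μ (closedBall c R) ≠ 0 :=
  fun h0 => absurd (le_antisymm (le_trans (measure_mono ball_subset_closedBall) h0.le)
    zero_le) (ne_of_gt (hc R hR))

lemma master (c : E) {R : ℝ} (hR : 0 < R) (hc : c ∈ msupp μ)
    {h : E → E} (hsim : IsSimilitude h (diam (closedBall c R)))
    (hd : 0 < diam (closedBall c R)) (r : ℝ) (hr : 0 < r) :
    IsProbabilityMeasure (condPull μ (closedBall c R) h) ∧
    IsCompact (msupp (condPull μ (closedBall c R) h)) ∧
    diam (msupp (condPull μ (closedBall c R) h)) ≤ 1 ∧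
    ∀ n : ℕ, ∀ γ : Finset E, γ.Nonempty → γ.card ≤ n →
      (μ (closedBall c R)).toReal * diam (closedBall c R) ^ r *
        quantErrPow (condPull μ (closedBall c R) h) r n ≤
      ∫ x in closedBall c R, infDist x (γ : Set E) ^ r ∂μ := by
  classical
  set B := closedBall c R with hB
  set ρ := diam B with hρdef
  set ν := ProbabilityTheory.cond μ B with hν
  have hμB0 : μ B ≠ 0 := measure_ball_pos_of_msupp hc hR
  have hμBtop : μ B ≠ ⊤ := measure_ne_top μ B
  haveI hνprob : IsProbabilityMeasure ν :=
    ProbabilityTheory.cond_isProbabilityMeasure hμB0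
  set e := Sim.homeo hsim hd with he
  set g : E → E := ⇑e.symm with hg
  have hgc : Continuous g := e.symm.continuous
  have hgm : Measurable g := hgc.measurable
  have hgh : ∀ x, g (h x) = x := fun x => e.symm_apply_apply x
  have hgdist : ∀ a b, dist (g a) (g b) = ρ⁻¹ * dist a b := Sim.symm_dist hsim hd
  have hcomap : condPull μ B h = Measure.map g ν := Sim.comap_eq_map hsim hd ν
  set lam := condPull μ B h with hlam
  haveI hlamprob : IsProbabilityMeasure lam := by
    rw [hcomap]; exact Measure.isProbabilityMeasure_map hgm.aemeasurable
  have hsupp : ∀ x ∈ msupp lam, h x ∈ B := by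
    intro x hx
    by_contra hxB
    have hdist : R < dist (h x) c := by
      simpa [hB, mem_closedBall, not_le] using hxB
    set d := dist (h x) c - R with hdd
    have hd0 : 0 < d := by simp [hdd]; linarith
    have hεpos : 0 < ρ⁻¹ * d := by positivity
    have hpos := hx (ρ⁻¹ * d) hεpos
    rw [hcomap, Measure.map_apply hgm measurableSet_ball] at hpos
    have hpre : g ⁻¹' ball x (ρ⁻¹ * d) = ball (h x) d := by
      ext y
      simp only [mem_preimage, mem_ball]
      rw [show dist (g y) x = ρ⁻¹ * dist y (h x) by
        conv_lhs => rw [← hgh x]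
        exact hgdist y (h x)]
      constructor
      · intro hy
        have := (mul_lt_mul_iff_right₀ (inv_pos.2 hd)).1 hy
        exact this
      · intro hy
        exact (mul_lt_mul_iff_right₀ (inv_pos.2 hd)).2 hy
    rw [hpre] at hpos
    have hdisj : ball (h x) d ∩ B = ∅ := by
      ext y
      simp only [mem_inter_iff, mem_ball, hB, mem_closedBall, mem_empty_iff_false,
        iff_false, not_and, not_le]
      intro hy1
      by_contra hy2
      push_neg at hy2
      have := dist_triangle (h x) y c
      rw [dist_comm (h x) y] at this
      simp [hdd] at hy1
      linarith
    have : ν (ball (h x) d) = 0 := by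
      rw [hν, ProbabilityTheory.cond]
      simp only [Measure.smul_apply, smul_eq_mul]
      rw [Measure.restrict_apply measurableSet_ball, hdisj]
      simp
    rw [this] at hpos
    exact absurd hpos (lt_irrefl 0)
  refine ⟨hlamprob, ?_, ?_, ?_⟩
  · -- compact
    refine IsCompact.of_isClosed_subset ((isCompact_closedBall c R).image hgc)
      (msupp_closed lam) ?_
    intro x hx
    exact ⟨h x, hsupp x hx, hgh x⟩
  · -- diam ≤ 1
    refine diam_le_of_forall_dist_le zero_le_one ?_
    intro x hx y hy
    have : dist x y = ρ⁻¹ * dist (h x) (h y) := by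
      conv_lhs => rw [← hgh x, ← hgh y]
      exact hgdist (h x) (h y)
    rw [this]
    calc ρ⁻¹ * dist (h x) (h y) ≤ ρ⁻¹ * ρ := by
          apply mul_le_mul_of_nonneg_left _ (by positivity)
          exact dist_le_diam_of_mem isBounded_closedBall (hsupp x hx) (hsupp y hy)
    _ = 1 := inv_mul_cancel₀ hd.ne'
  · -- quantization bound
    intro n γ hγne hγcard
    set δ : Finset E := γ.image g with hδ
    have hδne : δ.Nonempty := hγne.image g
    have hδcard : δ.card ≤ n := (Finset.card_image_le).trans hγcard
    have hq : quantErrPow lam r n ≤ ∫ u, infDist u (δ : Set E) ^ r ∂lam :=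
      quantErrPow_le hδne hδcard
    have hcont : Continuous fun u => infDist u (δ : Set E) ^ r := by
      apply Continuous.rpow_const (continuous_infDist_pt _)
      intro x; right; exact hr.le
    have hmap : ∫ u, infDist u (δ : Set E) ^ r ∂lam
        = ∫ y, infDist (g y) (δ : Set E) ^ r ∂ν := by
      rw [hcomap]
      exact integral_map hgm.aemeasurable hcont.aestronglyMeasurable
    have hscale : ∀ y, infDist (g y) (δ : Set E) = ρ⁻¹ * infDist y (γ : Set E) :=
      fun y => infDist_image_sim (by positivity) hgdist hγne y
    have hpow : ∀ y, infDist (g y) (δ : Set E) ^ r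
        = (ρ⁻¹) ^ r * infDist y (γ : Set E) ^ r := by
      intro y
      rw [hscale y, Real.mul_rpow (by positivity) infDist_nonneg]
    have hint2 : ∫ y, infDist (g y) (δ : Set E) ^ r ∂ν
        = (ρ⁻¹) ^ r * ∫ y, infDist y (γ : Set E) ^ r ∂ν := by
      simp_rw [hpow]
      exact integral_const_mul _ _
    have hcond : ∫ y, infDist y (γ : Set E) ^ r ∂ν
        = ((μ B)⁻¹).toReal * ∫ x in B, infDist x (γ : Set E) ^ r ∂μ := by
      rw [hν, ProbabilityTheory.cond, integral_smul_measure]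
      simp
    set I := ∫ x in B, infDist x (γ : Set E) ^ r ∂μ with hI
    have hInn : 0 ≤ I := setIntegral_nonneg measurableSet_closedBall
      (fun x _ => Real.rpow_nonneg infDist_nonneg r)
    have hM : (0:ℝ) < (μ B).toReal := ENNReal.toReal_pos hμB0 hμBtop
    have hρr : (0:ℝ) < ρ ^ r := Real.rpow_pos_of_pos hd r
    have hfinal : quantErrPow lam r n ≤ (ρ ^ r)⁻¹ * ((μ B).toReal⁻¹ * I) := by
      calc quantErrPow lam r n ≤ ∫ u, infDist u (δ : Set E) ^ r ∂lam := hq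
      _ = (ρ⁻¹) ^ r * (((μ B)⁻¹).toReal * I) := by rw [hmap, hint2, hcond]
      _ = (ρ ^ r)⁻¹ * ((μ B).toReal⁻¹ * I) := by
          rw [Real.inv_rpow hd.le, ENNReal.toReal_inv]
    calc (μ B).toReal * ρ ^ r * quantErrPow lam r n
        ≤ (μ B).toReal * ρ ^ r * ((ρ ^ r)⁻¹ * ((μ B).toReal⁻¹ * I)) := by
          apply mul_le_mul_of_nonneg_left hfinal (by positivity)
    _ = I := by field_simp

end Master

lemma numeric18 {r s0 C1 C2 ρ₀ : ℝ} (hr : 0 < r) (hs0 : 0 < s0) (hC1 : 0 < C1)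
    (hC2 : 0 < C2) (hρ₀ : 0 < ρ₀) :
    C2 * ((9/8) * ρ₀) ^ s0 * ((9/4) * ρ₀) ^ r * (C1 * C2⁻¹ * (18:ℝ) ^ (-(r + s0))) ≤
      C1 * ((1/8) * ρ₀) ^ s0 * ((9/8) * ρ₀) ^ r := by
  have hsplit : (18:ℝ) ^ (-(r + s0)) = (18:ℝ) ^ (-r) * (18:ℝ) ^ (-s0) := by
    rw [neg_add, Real.rpow_add (by norm_num)]
  have h16 : ((9:ℝ)/8) ^ s0 * (18:ℝ) ^ (-s0) = ((1:ℝ)/16) ^ s0 := by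
    rw [Real.rpow_neg (by norm_num), ← div_eq_mul_inv,
      ← Real.div_rpow (by norm_num) (by norm_num)]
    norm_num
  have h8 : ((9:ℝ)/4) ^ r * (18:ℝ) ^ (-r) = ((1:ℝ)/8) ^ r := by
    rw [Real.rpow_neg (by norm_num), ← div_eq_mul_inv,
      ← Real.div_rpow (by norm_num) (by norm_num)]
    norm_num
  have e1 : ((9/8) * ρ₀ : ℝ) ^ s0 = ((9:ℝ)/8) ^ s0 * ρ₀ ^ s0 :=
    Real.mul_rpow (by norm_num) hρ₀.le
  have e2 : ((9/4) * ρ₀ : ℝ) ^ r = ((9:ℝ)/4) ^ r * ρ₀ ^ r :=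
    Real.mul_rpow (by norm_num) hρ₀.le
  have e3 : ((1/8) * ρ₀ : ℝ) ^ s0 = ((1:ℝ)/8) ^ s0 * ρ₀ ^ s0 :=
    Real.mul_rpow (by norm_num) hρ₀.le
  have e4 : ((9/8) * ρ₀ : ℝ) ^ r = ((9:ℝ)/8) ^ r * ρ₀ ^ r :=
    Real.mul_rpow (by norm_num) hρ₀.le
  have hC2' : C2 * C2⁻¹ = 1 := mul_inv_cancel₀ hC2.ne'
  rw [e1, e2, e3, e4, hsplit]
  calc C2 * (((9:ℝ)/8) ^ s0 * ρ₀ ^ s0) * (((9:ℝ)/4) ^ r * ρ₀ ^ r) *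
        (C1 * C2⁻¹ * ((18:ℝ) ^ (-r) * (18:ℝ) ^ (-s0)))
      = (C2 * C2⁻¹) * C1 * ρ₀ ^ s0 * ρ₀ ^ r *
        ((((9:ℝ)/8) ^ s0 * (18:ℝ) ^ (-s0)) * (((9:ℝ)/4) ^ r * (18:ℝ) ^ (-r))) := by ring
    _ = C1 * ρ₀ ^ s0 * ρ₀ ^ r * (((1:ℝ)/16) ^ s0 * ((1:ℝ)/8) ^ r) := by
        rw [hC2', h16, h8]; ring
    _ ≤ C1 * ρ₀ ^ s0 * ρ₀ ^ r * (((1:ℝ)/8) ^ s0 * ((9:ℝ)/8) ^ r) := by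
        have i1 : ((1:ℝ)/16) ^ s0 ≤ ((1:ℝ)/8) ^ s0 :=
          Real.rpow_le_rpow (by norm_num) (by norm_num) hs0.le
        have i2 : ((1:ℝ)/8) ^ r ≤ ((9:ℝ)/8) ^ r :=
          Real.rpow_le_rpow (by norm_num) (by norm_num) hr.le
        have := mul_le_mul i1 i2 (Real.rpow_nonneg (by norm_num) r)
          (Real.rpow_nonneg (by norm_num) s0)
        apply mul_le_mul_of_nonneg_left this
        positivity
    _ = C1 * (((1:ℝ)/8) ^ s0 * ρ₀ ^ s0) * (((9:ℝ)/8) ^ r * ρ₀ ^ r) := by ring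

end Aux

/-- Let `n1` satisfy `e_{n1−1,r}(ν)^r ≤ C1·C2⁻¹·18^{−(r+s0)}` for all Borel
probability measures `ν` with compact support of diameter at most `1`. If `σ ∈ Ω_k` and `β` is a
finite nonempty set with fewer than `n1` points in `B(c_σ,(9/4)m^{-k})`, then, writing
`E' = B(c_σ,(9/8)m^{-k})`: (i) if some `y ∈ E_σ ∩ K` has a `β`-nearest point outside
`B(c_σ,(9/4)m^{-k})`, then `∫_{E'} d(x,β)^r dμ ≥ μ(E')·diam(E')^r·e_{n1−1,r}(λ_{E'})^r`;
(ii) otherwise `∫_{E_σ} d(x,β)^r dμ ≥ μ(E_σ)·diam(E_σ)^r·e_{n1−1,r}(λ_{E_σ})^r`. -/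
theorem stmt12 {E : Type*} [NormedAddCommGroup E] [NormedSpace ℝ E]
    [MeasurableSpace E] [BorelSpace E] [FiniteDimensional ℝ E]
    (r : ℝ) (hr : 0 < r)
    (μ : MeasureTheory.Measure E) [MeasureTheory.IsProbabilityMeasure μ]
    (s0 ε0 C1 C2 : ℝ) (hμ : IsAhlfors μ s0 ε0 C1 C2)
    (m : ℕ) (hm : 2 ≤ m) (k0 : ℕ)
    (hk0 : 2 * ((m : ℝ) ^ k0)⁻¹ < ε0)
    (hk0min : ∀ j : ℕ, 2 * ((m : ℝ) ^ j)⁻¹ < ε0 → k0 ≤ j)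
    (φ : ℕ → ℕ)
    (hφ : ∀ k, k0 ≤ k →
      IsGreatest {j | PackingNum (msupp μ) (((m : ℝ) ^ k)⁻¹) j} (φ k))
    (ctr : (k : ℕ) → Fin (φ k) → E)
    (hctr : ∀ k, k0 ≤ k → (∀ i, ctr k i ∈ msupp μ) ∧
      Pairwise fun i i' => Disjoint (Metric.closedBall (ctr k i) (((m : ℝ) ^ k)⁻¹))
        (Metric.closedBall (ctr k i') (((m : ℝ) ^ k)⁻¹)))
    (n1 : ℕ) (hn1pos : 1 ≤ n1)
    (hn1 : ∀ ν : MeasureTheory.Measure E, MeasureTheory.IsProbabilityMeasure ν →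
      IsCompact (msupp ν) → Metric.diam (msupp ν) ≤ 1 →
      quantErrPow ν r (n1 - 1) ≤ C1 * C2⁻¹ * (18 : ℝ) ^ (-(r + s0)))
    (k : ℕ) (hk : k0 ≤ k) (σ : Fin (φ k)) (β : Finset E) (hβ : β.Nonempty)
    (hβcard :
      ((β : Set E) ∩ Metric.closedBall (ctr k σ) ((9 / 4 : ℝ) * ((m : ℝ) ^ k)⁻¹)).ncard < n1) :
    ((∃ y ∈ Metric.closedBall (ctr k σ) (((m : ℝ) ^ k)⁻¹) ∩ msupp μ, ∃ b ∈ β,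
        b ∉ Metric.closedBall (ctr k σ) ((9 / 4 : ℝ) * ((m : ℝ) ^ k)⁻¹) ∧
        dist y b = Metric.infDist y (β : Set E)) →
      ∀ h : E → E,
        IsSimilitude h
          (Metric.diam (Metric.closedBall (ctr k σ) ((9 / 8 : ℝ) * ((m : ℝ) ^ k)⁻¹))) →
        (μ (Metric.closedBall (ctr k σ) ((9 / 8 : ℝ) * ((m : ℝ) ^ k)⁻¹))).toReal *
            Metric.diam (Metric.closedBall (ctr k σ) ((9 / 8 : ℝ) * ((m : ℝ) ^ k)⁻¹)) ^ r *
            quantErrPow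
              (condPull μ (Metric.closedBall (ctr k σ) ((9 / 8 : ℝ) * ((m : ℝ) ^ k)⁻¹)) h)
              r (n1 - 1) ≤
          ∫ x in Metric.closedBall (ctr k σ) ((9 / 8 : ℝ) * ((m : ℝ) ^ k)⁻¹),
            Metric.infDist x (β : Set E) ^ r ∂μ) ∧
    (¬(∃ y ∈ Metric.closedBall (ctr k σ) (((m : ℝ) ^ k)⁻¹) ∩ msupp μ, ∃ b ∈ β,
        b ∉ Metric.closedBall (ctr k σ) ((9 / 4 : ℝ) * ((m : ℝ) ^ k)⁻¹) ∧
        dist y b = Metric.infDist y (β : Set E)) →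
      ∀ h : E → E,
        IsSimilitude h (Metric.diam (Metric.closedBall (ctr k σ) (((m : ℝ) ^ k)⁻¹))) →
        (μ (Metric.closedBall (ctr k σ) (((m : ℝ) ^ k)⁻¹))).toReal *
            Metric.diam (Metric.closedBall (ctr k σ) (((m : ℝ) ^ k)⁻¹)) ^ r *
            quantErrPow (condPull μ (Metric.closedBall (ctr k σ) (((m : ℝ) ^ k)⁻¹)) h)
              r (n1 - 1) ≤
          ∫ x in Metric.closedBall (ctr k σ) (((m : ℝ) ^ k)⁻¹),
            Metric.infDist x (β : Set E) ^ r ∂μ) := by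
  classical
  obtain ⟨hs0, hε0, hC1, hC2, hAD, hglob⟩ := hμ
  have hm1 : (1:ℝ) < (m:ℝ) := by exact_mod_cast Nat.lt_of_lt_of_le one_lt_two hm
  have hm0 : (0:ℝ) < (m:ℝ) := lt_trans zero_lt_one hm1
  set ρ₀ : ℝ := ((m:ℝ)^k)⁻¹ with hρ₀def
  have hρ₀ : 0 < ρ₀ := by positivity
  have hρ₀ε : ρ₀ < ε0 := by
    have h1 : ((m:ℝ)^k0) ≤ (m:ℝ)^k := pow_le_pow_right₀ hm1.le hk
    have h2 : ρ₀ ≤ ((m:ℝ)^k0)⁻¹ := by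
      rw [hρ₀def]
      exact inv_anti₀ (by positivity) h1
    have h3 : (0:ℝ) < ((m:ℝ)^k0)⁻¹ := by positivity
    linarith
  have hcσ : ctr k σ ∈ msupp μ := (hctr k hk).1 σ
  have hKae : ∀ᵐ x ∂μ, x ∈ msupp μ := by
    rw [ae_iff]
    exact msupp_compl_null μ
  have hcontβ : Continuous fun x => infDist x (β : Set E) ^ r :=
    Continuous.rpow_const (continuous_infDist_pt _) (fun x => Or.inr hr.le)
  constructor
  · rintro ⟨y, ⟨hyE, hyK⟩, b, hbβ, hbout, hby⟩ h hsimh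
    set R' : ℝ := (9/8) * ρ₀ with hR'def
    have hR' : 0 < R' := by positivity
    set B' := closedBall (ctr k σ) R' with hB'
    rcases eq_or_lt_of_le (diam_nonneg : 0 ≤ diam B') with hdm | hdm
    · rw [← hdm, Real.zero_rpow hr.ne', mul_zero, zero_mul]
      exact setIntegral_nonneg measurableSet_closedBall
        fun x _ => Real.rpow_nonneg infDist_nonneg r
    · obtain ⟨hprob, hcomp, hdiam1, -⟩ := master (ctr k σ) hR' hcσ hsimh hdm r hr
      have hqb := hn1 _ hprob hcomp hdiam1
      have hyβ : (5/4) * ρ₀ ≤ infDist y (β : Set E) := by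
        rw [← hby]
        have h1 : (9/4) * ρ₀ < dist b (ctr k σ) := by
          simpa [mem_closedBall, not_le] using hbout
        have h2 : dist y (ctr k σ) ≤ ρ₀ := mem_closedBall.1 hyE
        have h3 := dist_triangle b y (ctr k σ)
        have h4 : dist b y = dist y b := dist_comm b y
        linarith
      have hlow : ∀ x ∈ closedBall y ((1/8) * ρ₀), (9/8) * ρ₀ ≤ infDist x (β : Set E) := by
        intro x hx
        have h1 : infDist y (β : Set E) ≤ infDist x (β : Set E) + dist y x :=
          infDist_le_infDist_add_dist
        have h2 : dist x y ≤ (1/8)*ρ₀ := mem_closedBall.1 hx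
        have h4 : dist y x = dist x y := dist_comm y x
        linarith
      have hsub : closedBall y ((1/8) * ρ₀) ⊆ B' := by
        intro z hz
        rw [hB', mem_closedBall]
        have h1 := mem_closedBall.1 hz
        have h2 := mem_closedBall.1 hyE
        calc dist z (ctr k σ) ≤ dist z y + dist y (ctr k σ) := dist_triangle _ _ _
        _ ≤ (1/8)*ρ₀ + ρ₀ := add_le_add h1 h2
        _ = R' := by rw [hR'def]; ring
      have hintB' : IntegrableOn (fun x => infDist x (β : Set E) ^ r) B' μ :=
        hcontβ.continuousOn.integrableOn_compact (isCompact_closedBall _ _)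
      have hμlow : C1 * ((1/8) * ρ₀) ^ s0 ≤ (μ (closedBall y ((1/8) * ρ₀))).toReal := by
        have hle := (hAD y hyK ((1/8)*ρ₀) (by positivity) (by linarith)).1
        calc C1 * ((1/8)*ρ₀)^s0 = (ENNReal.ofReal (C1 * ((1/8)*ρ₀)^s0)).toReal := by
              rw [ENNReal.toReal_ofReal (by positivity)]
        _ ≤ _ := ENNReal.toReal_mono (measure_ne_top μ _) hle
      have hμup : (μ B').toReal ≤ C2 * ((9/8) * ρ₀) ^ s0 := by
        have hle := hglob (ctr k σ) R' hR'
        rw [hR'def] at hle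
        exact ENNReal.toReal_le_of_le_ofReal (by positivity) hle
      have hdiamup : diam B' ^ r ≤ ((9/4) * ρ₀) ^ r := by
        apply Real.rpow_le_rpow diam_nonneg _ hr.le
        calc diam B' ≤ 2 * R' := diam_closedBall hR'.le
        _ = (9/4)*ρ₀ := by rw [hR'def]; ring
      have hc0 : (0:ℝ) ≤ C1 * C2⁻¹ * (18:ℝ)^(-(r+s0)) := by positivity
      calc (μ B').toReal * diam B' ^ r * quantErrPow (condPull μ B' h) r (n1-1)
          ≤ (μ B').toReal * diam B' ^ r * (C1 * C2⁻¹ * (18:ℝ)^(-(r+s0))) := by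
            apply mul_le_mul_of_nonneg_left hqb
            have := ENNReal.toReal_nonneg (a := μ B')
            positivity
        _ ≤ (C2 * ((9/8)*ρ₀) ^ s0) * (((9/4)*ρ₀) ^ r) * (C1 * C2⁻¹ * (18:ℝ)^(-(r+s0))) := by
            apply mul_le_mul_of_nonneg_right _ hc0
            apply mul_le_mul hμup hdiamup (Real.rpow_nonneg diam_nonneg r) (by positivity)
        _ ≤ C1 * ((1/8)*ρ₀) ^ s0 * ((9/8)*ρ₀) ^ r := numeric18 hr hs0 hC1 hC2 hρ₀
        _ ≤ (μ (closedBall y ((1/8)*ρ₀))).toReal * ((9/8)*ρ₀) ^ r :=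
            mul_le_mul_of_nonneg_right hμlow (Real.rpow_nonneg (by positivity) r)
        _ = ∫ _x in closedBall y ((1/8)*ρ₀), ((9/8)*ρ₀) ^ r ∂μ := by
            rw [setIntegral_const, smul_eq_mul]; rfl
        _ ≤ ∫ x in closedBall y ((1/8)*ρ₀), infDist x (β : Set E) ^ r ∂μ := by
            apply setIntegral_mono_on
              (integrableOn_const (C := ((9/8)*ρ₀) ^ r) (measure_ne_top μ _))
              (hintB'.mono_set hsub) measurableSet_closedBall
            intro x hx
            exact Real.rpow_le_rpow (by positivity) (hlow x hx) hr.le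
        _ ≤ ∫ x in B', infDist x (β : Set E) ^ r ∂μ := by
            apply setIntegral_mono_set hintB'
              (Filter.Eventually.of_forall fun x => Real.rpow_nonneg infDist_nonneg r)
              (HasSubset.Subset.eventuallyLE hsub)
  · intro hno h hsimh
    set B := closedBall (ctr k σ) ρ₀ with hBdef
    rcases eq_or_lt_of_le (diam_nonneg : 0 ≤ diam B) with hdm | hdm
    · rw [← hdm, Real.zero_rpow hr.ne', mul_zero, zero_mul]
      exact setIntegral_nonneg measurableSet_closedBall
        fun x _ => Real.rpow_nonneg infDist_nonneg r
    · obtain ⟨-, -, -, hquant⟩ := master (ctr k σ) hρ₀ hcσ hsimh hdm r hr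
      set γ : Finset E := β.filter (fun a => a ∈ closedBall (ctr k σ) ((9/4) * ρ₀)) with hγdef
      have hγcoe : (γ : Set E) = (β : Set E) ∩ closedBall (ctr k σ) ((9/4) * ρ₀) := by
        ext x
        simp [hγdef, Finset.mem_filter]
      have hγcard : γ.card ≤ n1 - 1 := by
        apply Nat.le_sub_one_of_lt
        have hcc : γ.card = ((β : Set E) ∩ closedBall (ctr k σ) ((9/4) * ρ₀)).ncard := by
          rw [← hγcoe, Set.ncard_coe_finset]
        rw [hcc]
        exact hβcard
      have hachieve : ∀ x, x ∈ B → x ∈ msupp μ →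
          ∃ bx ∈ γ, dist x bx = infDist x (β : Set E) := by
        intro x hxB hxK
        obtain ⟨bx, hbx, hdbx⟩ := infDist_finset_exists hβ x
        refine ⟨bx, ?_, hdbx.symm⟩
        rw [hγdef, Finset.mem_filter]
        refine ⟨hbx, ?_⟩
        by_contra hout
        exact hno ⟨x, ⟨hxB, hxK⟩, bx, hbx, hout, hdbx.symm⟩
      have hγne : γ.Nonempty := by
        obtain ⟨b0, hb0, -⟩ := hachieve (ctr k σ) (mem_closedBall_self hρ₀.le) hcσ
        exact ⟨b0, hb0⟩
      have hcontγ : Continuous fun x => infDist x (γ : Set E) ^ r :=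
        Continuous.rpow_const (continuous_infDist_pt _) (fun x => Or.inr hr.le)
      have hintβ : IntegrableOn (fun x => infDist x (β : Set E) ^ r) B μ :=
        hcontβ.continuousOn.integrableOn_compact (isCompact_closedBall _ _)
      have hintγ : IntegrableOn (fun x => infDist x (γ : Set E) ^ r) B μ :=
        hcontγ.continuousOn.integrableOn_compact (isCompact_closedBall _ _)
      have hmono : ∫ x in B, infDist x (γ : Set E) ^ r ∂μ ≤
          ∫ x in B, infDist x (β : Set E) ^ r ∂μ := by
        apply setIntegral_mono_on_ae hintγ hintβ measurableSet_closedBall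
        filter_upwards [hKae] with x hxK hxB
        obtain ⟨bx, hbxγ, hdbx⟩ := hachieve x hxB hxK
        have hle : infDist x (γ : Set E) ≤ infDist x (β : Set E) := by
          rw [← hdbx]
          exact infDist_le_dist_of_mem (by exact_mod_cast hbxγ)
        exact Real.rpow_le_rpow infDist_nonneg hle hr.le
      exact le_trans (hquant (n1-1) γ hγne hγcard) hmono
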